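/- Let A and B be pseudo-curves in Ω with A < B. Then E_AB = closure(interior(E_AB)); in particular, E_AB has non-empty interior. -/

import Mathlib

open Dynamics Set

noncomputable section

/-- The circle `S¹ = ℝ/ℤ`. -/
abbrev S1 : Type := AddCircle (1 : ℝ)

/-- The unit interval `I = [0,1]` as a type. -/
abbrev II : Type := Set.Icc (0 : ℝ) 1

/-- The cylinder `Ω = S¹ × I`. -/
abbrev Cyl : Type := S1 × II

/-- The fiber of a subset of the cylinder over `θ ∈ S¹`. -/
def fiber (A : Set Cyl) (θ : S1) : Set II := {x : II | (θ, x) ∈ A}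

/-- `M_A θ = max {x ∈ I : (θ, x) ∈ A}`. -/
def MA (A : Set Cyl) (θ : S1) : ℝ := sSup (Subtype.val '' fiber A θ)

/-- `m_A θ = min {x ∈ I : (θ, x) ∈ A}`. -/
def mA (A : Set Cyl) (θ : S1) : ℝ := sInf (Subtype.val '' fiber A θ)

/-- A strip: a closed set projecting onto all of `S¹` whose fibers over a residual
set of `θ`'s are (possibly degenerate) nonempty closed intervals. -/
def IsStrip (A : Set Cyl) : Prop :=
  IsClosed A ∧ (∀ θ : S1, ∃ x : II, (θ, x) ∈ A) ∧
    ∃ G ∈ residual S1, ∀ θ ∈ G, ∃ a b : II, a ≤ b ∧ fiber A θ = Set.Icc a b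

/-- `A < B` for strips. -/
def stripLT (A B : Set Cyl) : Prop := ∃ G ∈ residual S1, ∀ θ ∈ G, MA A θ < mA B θ

/-- `A ≤ B` for strips. -/
def stripLE (A B : Set Cyl) : Prop := ∃ G ∈ residual S1, ∀ θ ∈ G, MA A θ ≤ mA B θ

/-- Two strips are ordered if `A < B` or `B < A`. -/
def StripOrdered (A B : Set Cyl) : Prop := stripLT A B ∨ stripLT B A

/-- Two strips are weakly ordered if `A ≤ B` or `B ≤ A`. -/
def StripWeaklyOrdered (A B : Set Cyl) : Prop := stripLE A B ∨ stripLE B A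

/-- The class `S(Ω)` of quasiperiodically forced skew-products on the cylinder:
continuous maps whose first coordinate is an irrational rotation. -/
def IsQPF (F : Cyl → Cyl) : Prop :=
  Continuous F ∧ ∃ ω : ℝ, Irrational ω ∧ ∀ p : Cyl, (F p).1 = p.1 + (ω : S1)

/-- `B` is an `n`-periodic strip of `F`: `F^n(B) = B` and the iterates
`B, F(B), …, F^{n-1}(B)` are pairwise disjoint and pairwise ordered. -/
def IsPeriodicStripOrbit (F : Cyl → Cyl) (n : ℕ) (B : Set Cyl) : Prop :=
  IsStrip B ∧ F^[n] '' B = B ∧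
    ∀ i j : ℕ, i < j → j < n →
      Disjoint (F^[i] '' B) (F^[j] '' B) ∧ StripOrdered (F^[i] '' B) (F^[j] '' B)

/-- A cyclic permutation: the (forward) orbit of any point is everything. -/
def IsCyclicPerm {n : ℕ} (τ : Equiv.Perm (Fin n)) : Prop :=
  ∀ i j : Fin n, ∃ k : ℕ, (τ ^ k) i = j

/-- `F` exhibits the strips pattern `τ`: it has a periodic orbit of strips,
spatially labelled, moved around according to `τ`. -/
def ExhibitsStripPattern (F : Cyl → Cyl) {n : ℕ} (τ : Equiv.Perm (Fin n)) : Prop :=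
  ∃ B : Fin n → Set Cyl,
    (∀ i, IsStrip (B i)) ∧
    (∀ i j : Fin n, i < j → stripLT (B i) (B j)) ∧
    (Pairwise fun i j => Disjoint (B i) (B j)) ∧
    (∀ i, F '' B i = B (τ i))

/-- A continuous interval map has a periodic orbit with interval pattern `τ`. -/
def HasIntervalPattern (f : II → II) {n : ℕ} (τ : Equiv.Perm (Fin n)) : Prop :=
  ∃ p : Fin n → II, StrictMono p ∧ ∀ i, f (p i) = p (τ i)

/-- `τ` forces `ν` as interval patterns. -/
def ForcesI {n m : ℕ} (τ : Equiv.Perm (Fin n)) (ν : Equiv.Perm (Fin m)) : Prop :=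
  ∀ f : II → II, Continuous f → HasIntervalPattern f τ → HasIntervalPattern f ν

/-- `τ` forces `ν` in `Ω`. -/
def ForcesOmega {n m : ℕ} (τ : Equiv.Perm (Fin n)) (ν : Equiv.Perm (Fin m)) : Prop :=
  ∀ F : Cyl → Cyl, IsQPF F → ExhibitsStripPattern F τ → ExhibitsStripPattern F ν

/-- `p >_Sh q` in the Sharkovskiĭ ordering. -/
def SharkGT (p q : ℕ) : Prop :=
  ∃ i m j l : ℕ, Odd m ∧ Odd l ∧ p = 2 ^ i * m ∧ q = 2 ^ j * l ∧
    ((m = 1 ∧ l = 1 ∧ j < i) ∨ (1 < m ∧ l = 1) ∨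
      (1 < m ∧ 1 < l ∧ (i < j ∨ (i = j ∧ m < l))))

/-- The core of a subset of the cylinder. -/
def core (M : Set Cyl) : Set Cyl :=
  ⋂ (G : Set S1) (_ : G ∈ residual S1), closure (M ∩ Prod.fst ⁻¹' G)

/-- A band is a strip equal to its core. -/
def IsBand (A : Set Cyl) : Prop := IsStrip A ∧ core A = A

/-- Continuity points of a real-valued function on the circle. -/
def contPts (g : S1 → ℝ) : Set S1 := {θ | ContinuousAt g θ}

/-- The top cover `A⁺` of a strip: the closure of the graph of `M_A` restricted to its
residual set of continuity points. -/
def topCover (A : Set Cyl) : Set Cyl :=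
  closure {p : Cyl | p.1 ∈ contPts (MA A) ∧ (p.2 : ℝ) = MA A p.1}

/-- The bottom cover `A⁻` of a strip. -/
def botCover (A : Set Cyl) : Set Cyl :=
  closure {p : Cyl | p.1 ∈ contPts (mA A) ∧ (p.2 : ℝ) = mA A p.1}

/-- `A` positively `F`-covers `B`. -/
def FCoversPos (F : Cyl → Cyl) (A B : Set Cyl) : Prop :=
  stripLE (F '' botCover A) (botCover B) ∧ stripLE (topCover B) (F '' topCover A)

/-- `A` negatively `F`-covers `B`. -/
def FCoversNeg (F : Cyl → Cyl) (A B : Set Cyl) : Prop :=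
  stripLE (topCover B) (F '' botCover A) ∧ stripLE (F '' topCover A) (botCover B)

/-- `A` `F`-covers `B`. -/
def FCovers (F : Cyl → Cyl) (A B : Set Cyl) : Prop := FCoversPos F A B ∨ FCoversNeg F A B

/-- An `s`-horseshoe `(J, D)` for `F`. -/
def IsHorseshoe (F : Cyl → Cyl) (s : ℕ) (J : Set Cyl) (D : Finset (Set Cyl)) : Prop :=
  2 ≤ s ∧ D.card = s ∧ IsBand J ∧
    (∀ L ∈ D, IsBand L ∧ (interior L).Nonempty ∧ FCovers F L J) ∧
    (∀ L ∈ D, ∀ L' ∈ D, L ≠ L' → StripWeaklyOrdered L L')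

/-- Topological entropy (cover entropy of the whole space). -/
def hTop {X : Type} [UniformSpace X] (F : X → X) : EReal := coverEntropy F Set.univ

/-- A pseudo-curve: the closure of the graph of a continuous map from a residual
subset of the circle to the interval. -/
def IsPseudoCurve (A : Set Cyl) : Prop :=
  ∃ G ∈ residual S1, ∃ φ : S1 → II, Continuous (G.restrict φ) ∧
    A = closure {p : Cyl | p.1 ∈ G ∧ p.2 = φ p.1}

/-- The band `E_{AB}` between two pseudo-curves `A < B`. -/
def bandBetween (A B : Set Cyl) : Set Cyl :=
  closure {p : Cyl | p.1 ∈ contPts (MA A) ∧ p.1 ∈ contPts (mA B) ∧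
    MA A p.1 < (p.2 : ℝ) ∧ (p.2 : ℝ) < mA B p.1}

/-- `f` is affine on the subinterval `[a, b]` of `I`. -/
def AffineOnIcc (f : II → II) (a b : II) : Prop :=
  ∀ x : II, a ≤ x → x ≤ b →
    ((b : ℝ) - (a : ℝ)) * ((f x : ℝ) - (f a : ℝ)) =
      ((x : ℝ) - (a : ℝ)) * ((f b : ℝ) - (f a : ℝ))

/-- `f` is the `P`-linear (connect-the-dots) map over the points `p 0 < p 1 < … < p n`:
continuous, affine on each `[p i, p (i+1)]` and constant on both components of
`I ∖ [p 0, p n]`. -/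
def IsPLinear {n : ℕ} (f : II → II) (p : Fin (n + 1) → II) : Prop :=
  Continuous f ∧
    (∀ k : Fin n, AffineOnIcc f (p k.castSucc) (p k.succ)) ∧
    (∀ x : II, x ≤ p 0 → f x = f (p 0)) ∧
    (∀ x : II, p (Fin.last n) ≤ x → f x = f (p (Fin.last n)))

/-- Signed arrow between basic intervals `J_k = [p k, p (k+1)]` and `J_l` in the
`P`-signed Markov graph of `f` (`true` = positive covering, `false` = negative). -/
def IArrow {n : ℕ} (f : II → II) (p : Fin (n + 1) → II) (s : Bool) (k l : Fin n) : Prop :=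
  if s then
    (f (p k.castSucc) : ℝ) ≤ (p l.castSucc : ℝ) ∧ (p l.succ : ℝ) ≤ (f (p k.succ) : ℝ)
  else
    (f (p k.succ) : ℝ) ≤ (p l.castSucc : ℝ) ∧ (p l.succ : ℝ) ≤ (f (p k.castSucc) : ℝ)

/-- A loop of length `m` in the `P`-signed Markov graph of `f`, encoded as `m`-periodic
sequences of vertices (basic intervals) and signs. -/
def IsILoop {n : ℕ} (f : II → II) (p : Fin (n + 1) → II) (m : ℕ)
    (v : ℕ → Fin n) (s : ℕ → Bool) : Prop :=
  0 < m ∧ (∀ i, v (i + m) = v i) ∧ (∀ i, s (i + m) = s i) ∧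
    ∀ i, IArrow f p (s i) (v i) (v (i + 1))

/-- A periodic point `x` of (exact) period `m` is associated to the loop with vertex
sequence `v` if `f^i(x) ∈ J_{v i}` for all `i`. -/
def IAssocPt {n : ℕ} (f : II → II) (p : Fin (n + 1) → II) (m : ℕ)
    (x : II) (v : ℕ → Fin n) : Prop :=
  f^[m] x = x ∧ (∀ i : ℕ, 0 < i → i < m → f^[i] x ≠ x) ∧
    ∀ i : ℕ, p (v i).castSucc ≤ f^[i] x ∧ f^[i] x ≤ p (v i).succ

/-- The sign (`true` = `+`) of the initial segment of length `k` of a signed path. -/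
def signAt (s : ℕ → Bool) (k : ℕ) : Bool :=
  decide (Even ((Finset.range k).filter (fun i => s i = false)).card)

/-- Lexicographic ordering of (infinite liftings of) signed paths, comparing the vertex
sequences `v` and `w`; at the first difference the comparison is reversed iff the sign
of the common initial segment is negative. -/
def seqLT {n : ℕ} (v : ℕ → Fin n) (s : ℕ → Bool) (w : ℕ → Fin n) : Prop :=
  ∃ k : ℕ, (∀ i < k, v i = w i) ∧ v k ≠ w k ∧ (v k < w k ↔ signAt s k = true)

/-- The shift of a sequence by `i`. -/
def shiftSeq {α : Type} (v : ℕ → α) (i : ℕ) : ℕ → α := fun j => v (i + j)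

/-- A loop of length `m` (given by `m`-periodic sequences) is simple if it is not the
repetition of a shorter loop. -/
def SimpleLoop {α β : Type} (m : ℕ) (v : ℕ → α) (s : ℕ → β) : Prop :=
  ¬ ∃ d : ℕ, 0 < d ∧ d < m ∧ d ∣ m ∧ (∀ i, v (i + d) = v i) ∧ (∀ i, s (i + d) = s i)

/-- The basic bands associated to a (spatially labelled) periodic orbit of strips
`B 0 < B 1 < … < B n`: `I_{B_k B_{k+1}} = E_{(B_k)⁺ (B_{k+1})⁻}`. -/
def basicBand {n : ℕ} (B : Fin (n + 1) → Set Cyl) (k : Fin n) : Set Cyl :=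
  bandBetween (topCover (B k.castSucc)) (botCover (B k.succ))

/-- Signed arrow between bands in a signed Markov graph of `F`. -/
def BArrow (F : Cyl → Cyl) (s : Bool) (A B : Set Cyl) : Prop :=
  if s then FCoversPos F A B else FCoversNeg F A B

/-- A loop of length `m` in the signed Markov graph of `F` over the basic bands of the
periodic orbit of strips `B`. -/
def IsBLoop (F : Cyl → Cyl) {n : ℕ} (B : Fin (n + 1) → Set Cyl) (m : ℕ)
    (v : ℕ → Fin n) (s : ℕ → Bool) : Prop :=
  0 < m ∧ (∀ i, v (i + m) = v i) ∧ (∀ i, s (i + m) = s i) ∧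
    ∀ i, BArrow F (s i) (basicBand B (v i)) (basicBand B (v (i + 1)))

/-- Equality of patterns given as cyclic permutations of possibly different index sets. -/
def PatternEqNat {a b : ℕ} (τ : Equiv.Perm (Fin a)) (ν : Equiv.Perm (Fin b)) : Prop :=
  a = b ∧ ∀ (i : Fin a) (j : Fin b), (i : ℕ) = (j : ℕ) → ((τ i : ℕ) = (ν j : ℕ))

/-- The entropy of a strips pattern: the infimum of the entropies of the maps in `S(Ω)`
exhibiting it. -/
def patternEntropy {n : ℕ} (τ : Equiv.Perm (Fin n)) : EReal :=
  sInf {e : EReal | ∃ F : Cyl → Cyl, IsQPF F ∧ ExhibitsStripPattern F τ ∧ e = hTop F}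

end

open Filter Topology Set

section Helpers

lemma bddAbove_val_fiber (A : Set Cyl) (θ : S1) : BddAbove (Subtype.val '' fiber A θ) := by
  refine ⟨1, ?_⟩; rintro y ⟨x, -, rfl⟩; exact x.2.2

lemma bddBelow_val_fiber (A : Set Cyl) (θ : S1) : BddBelow (Subtype.val '' fiber A θ) := by
  refine ⟨0, ?_⟩; rintro y ⟨x, -, rfl⟩; exact x.2.1

lemma le_MA {A : Set Cyl} {θ : S1} {x : II} (h : (θ, x) ∈ A) : (x : ℝ) ≤ MA A θ :=
  le_csSup (bddAbove_val_fiber A θ) ⟨x, h, rfl⟩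

lemma mA_le {A : Set Cyl} {θ : S1} {x : II} (h : (θ, x) ∈ A) : mA A θ ≤ (x : ℝ) :=
  csInf_le (bddBelow_val_fiber A θ) ⟨x, h, rfl⟩

lemma isCompact_val_fiber {A : Set Cyl} (hA : IsClosed A) (θ : S1) :
    IsCompact (Subtype.val '' fiber A θ) := by
  have h1 : IsClosed (fiber A θ) := hA.preimage (Continuous.prodMk_right θ)
  exact h1.isCompact.image continuous_subtype_val

lemma MA_mem {A : Set Cyl} (hA : IsClosed A) {θ : S1} (hne : ∃ x : II, (θ, x) ∈ A) :
    ∃ x : II, (θ, x) ∈ A ∧ (x : ℝ) = MA A θ := by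
  obtain ⟨x0, hx0⟩ := hne
  have hne' : (Subtype.val '' fiber A θ).Nonempty := ⟨x0, x0, hx0, rfl⟩
  obtain ⟨x, hx, hxe⟩ := (isCompact_val_fiber hA θ).sSup_mem hne'
  exact ⟨x, hx, hxe⟩

lemma mA_mem {A : Set Cyl} (hA : IsClosed A) {θ : S1} (hne : ∃ x : II, (θ, x) ∈ A) :
    ∃ x : II, (θ, x) ∈ A ∧ (x : ℝ) = mA A θ := by
  obtain ⟨x0, hx0⟩ := hne
  have hne' : (Subtype.val '' fiber A θ).Nonempty := ⟨x0, x0, hx0, rfl⟩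
  obtain ⟨x, hx, hxe⟩ := (isCompact_val_fiber hA θ).sInf_mem hne'
  exact ⟨x, hx, hxe⟩

lemma eventually_MA_lt {A : Set Cyl} (hA : IsClosed A) (hne : ∀ θ : S1, ∃ x : II, (θ, x) ∈ A)
    {θ₀ : S1} {c : ℝ} (h : MA A θ₀ < c) : ∀ᶠ θ in 𝓝 θ₀, MA A θ < c := by
  have hcl : IsClosed {p : Cyl | c ≤ (p.2 : ℝ)} :=
    isClosed_le continuous_const (continuous_subtype_val.comp continuous_snd)
  have hK : IsCompact (A ∩ {p : Cyl | c ≤ (p.2 : ℝ)}) := (hA.inter hcl).isCompact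
  have himg : IsClosed (Prod.fst '' (A ∩ {p : Cyl | c ≤ (p.2 : ℝ)})) :=
    (hK.image continuous_fst).isClosed
  have hθ₀ : θ₀ ∈ (Prod.fst '' (A ∩ {p : Cyl | c ≤ (p.2 : ℝ)}))ᶜ := by
    rintro ⟨p, ⟨hpA, hpc⟩, rfl⟩
    have h2 : (p.2 : ℝ) ≤ MA A p.1 := le_MA hpA
    have h3 : c ≤ (p.2 : ℝ) := hpc
    linarith
  have hmem : (Prod.fst '' (A ∩ {p : Cyl | c ≤ (p.2 : ℝ)}))ᶜ ∈ 𝓝 θ₀ :=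
    himg.isOpen_compl.mem_nhds hθ₀
  filter_upwards [hmem] with θ hθ
  obtain ⟨x, hx, hxe⟩ := MA_mem hA (hne θ)
  rw [← hxe]
  by_contra h'
  push_neg at h'
  exact hθ ⟨(θ, x), ⟨hx, h'⟩, rfl⟩

lemma eventually_lt_mA {A : Set Cyl} (hA : IsClosed A) (hne : ∀ θ : S1, ∃ x : II, (θ, x) ∈ A)
    {θ₀ : S1} {c : ℝ} (h : c < mA A θ₀) : ∀ᶠ θ in 𝓝 θ₀, c < mA A θ := by
  have hcl : IsClosed {p : Cyl | (p.2 : ℝ) ≤ c} :=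
    isClosed_le (continuous_subtype_val.comp continuous_snd) continuous_const
  have hK : IsCompact (A ∩ {p : Cyl | (p.2 : ℝ) ≤ c}) := (hA.inter hcl).isCompact
  have himg : IsClosed (Prod.fst '' (A ∩ {p : Cyl | (p.2 : ℝ) ≤ c})) :=
    (hK.image continuous_fst).isClosed
  have hθ₀ : θ₀ ∈ (Prod.fst '' (A ∩ {p : Cyl | (p.2 : ℝ) ≤ c}))ᶜ := by
    rintro ⟨p, ⟨hpA, hpc⟩, rfl⟩
    have h2 : mA A p.1 ≤ (p.2 : ℝ) := mA_le hpA
    have h3 : (p.2 : ℝ) ≤ c := hpc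
    linarith
  have hmem : (Prod.fst '' (A ∩ {p : Cyl | (p.2 : ℝ) ≤ c}))ᶜ ∈ 𝓝 θ₀ :=
    himg.isOpen_compl.mem_nhds hθ₀
  filter_upwards [hmem] with θ hθ
  obtain ⟨x, hx, hxe⟩ := mA_mem hA (hne θ)
  rw [← hxe]
  by_contra h'
  push_neg at h'
  exact hθ ⟨(θ, x), ⟨hx, h'⟩, rfl⟩

/-- From any point of an open set `U`, one can reach the closure of the graph of `φ`
inside any closed set `W` containing the `φ`-values over `U ∩ G`. -/
lemma pc_reach {G : Set S1} {φ : S1 → II} (hG : G ∈ residual S1)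
    {U : Set S1} (hU : IsOpen U) {W : Set II} (hW : IsClosed W)
    (hc : ∀ θ ∈ U ∩ G, φ θ ∈ W) {θ : S1} (hθ : θ ∈ U) :
    ∃ x : II, x ∈ W ∧ (θ, x) ∈ closure {p : Cyl | p.1 ∈ G ∧ p.2 = φ p.1} := by
  set Γ : Set Cyl := {p : Cyl | p.1 ∈ G ∧ p.2 = φ p.1} with hΓ
  set T : Set Cyl := (U ×ˢ (univ : Set II)) ∩ Γ with hT
  have hTsub : closure T ⊆ closure Γ := closure_mono inter_subset_right
  have hTW : closure T ⊆ {p : Cyl | p.2 ∈ W} := by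
    apply closure_minimal _ (hW.preimage continuous_snd)
    rintro p ⟨⟨hpU, -⟩, hpG, hpe⟩
    show p.2 ∈ W
    rw [hpe]; exact hc p.1 ⟨hpU, hpG⟩
  have himg : IsClosed (Prod.fst '' closure T) :=
    (isClosed_closure.isCompact.image continuous_fst).isClosed
  have hdense : Dense G := dense_of_mem_residual hG
  have hUsub : U ⊆ Prod.fst '' closure T := by
    have h1 : U ⊆ closure (U ∩ G) := fun a ha => hU.inter_closure ⟨ha, hdense a⟩
    refine h1.trans (closure_minimal ?_ himg)
    rintro a ⟨haU, haG⟩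
    exact ⟨(a, φ a), subset_closure ⟨⟨haU, mem_univ _⟩, haG, rfl⟩, rfl⟩
  obtain ⟨p, hp, hpe⟩ := hUsub hθ
  refine ⟨p.2, hTW hp, ?_⟩
  rw [← hpe]
  exact hTsub hp

lemma pc_fiber_nonempty {G : Set S1} {φ : S1 → II} (hG : G ∈ residual S1) (θ : S1) :
    ∃ x : II, (θ, x) ∈ closure {p : Cyl | p.1 ∈ G ∧ p.2 = φ p.1} := by
  obtain ⟨x, -, hx⟩ :=
    pc_reach hG isOpen_univ isClosed_univ (fun _ _ => mem_univ _) (mem_univ θ)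
  exact ⟨x, hx⟩

lemma pc_fiber_value {G : Set S1} {φ : S1 → II} (hφ : ContinuousOn φ G)
    {θ₀ : S1} (hθ₀ : θ₀ ∈ G) {x : II}
    (hx : (θ₀, x) ∈ closure {p : Cyl | p.1 ∈ G ∧ p.2 = φ p.1}) : x = φ θ₀ := by
  set Γ : Set Cyl := {p : Cyl | p.1 ∈ G ∧ p.2 = φ p.1} with hΓ
  have key : ∀ ε : ℝ, 0 < ε → |(x : ℝ) - (φ θ₀ : ℝ)| ≤ ε := by
    intro ε hε
    have hopen : IsOpen {y : II | |(y : ℝ) - (φ θ₀ : ℝ)| < ε} :=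
      isOpen_lt ((continuous_subtype_val.sub continuous_const).abs) continuous_const
    have hball : {y : II | |(y : ℝ) - (φ θ₀ : ℝ)| < ε} ∈ 𝓝 (φ θ₀) :=
      hopen.mem_nhds (by simp [hε])
    have h0 := (hφ θ₀ hθ₀) hball
    rw [Filter.mem_map, mem_nhdsWithin] at h0
    obtain ⟨U, hUo, hθ₀U, hUsub⟩ := h0
    have h1 : (θ₀, x) ∈ closure ((U ×ˢ (univ : Set II)) ∩ Γ) :=
      (hUo.prod isOpen_univ).inter_closure ⟨⟨hθ₀U, mem_univ _⟩, hx⟩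
    have h2 : (U ×ˢ (univ : Set II)) ∩ Γ ⊆ {p : Cyl | |(p.2 : ℝ) - (φ θ₀ : ℝ)| ≤ ε} := by
      rintro p ⟨⟨hpU, -⟩, hpG, hpe⟩
      have h3 : φ p.1 ∈ {y : II | |(y : ℝ) - (φ θ₀ : ℝ)| < ε} := hUsub ⟨hpU, hpG⟩
      show |(p.2 : ℝ) - (φ θ₀ : ℝ)| ≤ ε
      rw [hpe]; exact le_of_lt h3
    have hcl : IsClosed {p : Cyl | |(p.2 : ℝ) - (φ θ₀ : ℝ)| ≤ ε} :=
      isClosed_le ((continuous_subtype_val.comp continuous_snd).sub continuous_const).abs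
        continuous_const
    exact closure_minimal h2 hcl h1
  have h4 : |(x : ℝ) - (φ θ₀ : ℝ)| ≤ 0 := by
    by_contra h'
    push_neg at h'
    have := key (|(x : ℝ) - (φ θ₀ : ℝ)| / 2) (by linarith)
    linarith
  have h5 : (x : ℝ) = (φ θ₀ : ℝ) := by
    have := abs_nonneg ((x : ℝ) - (φ θ₀ : ℝ))
    have h6 : (x : ℝ) - (φ θ₀ : ℝ) = 0 := abs_nonpos_iff.mp h4
    linarith
  exact Subtype.ext h5

lemma pc_fiber_eq {G : Set S1} {φ : S1 → II} (hG : G ∈ residual S1) (hφ : ContinuousOn φ G)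
    {θ₀ : S1} (hθ₀ : θ₀ ∈ G) :
    fiber (closure {p : Cyl | p.1 ∈ G ∧ p.2 = φ p.1}) θ₀ = {φ θ₀} := by
  ext x
  constructor
  · intro hx
    exact pc_fiber_value hφ hθ₀ hx
  · rintro rfl
    exact subset_closure ⟨hθ₀, rfl⟩

lemma pc_MA_eq {G : Set S1} {φ : S1 → II} (hG : G ∈ residual S1) (hφ : ContinuousOn φ G)
    {θ₀ : S1} (hθ₀ : θ₀ ∈ G) :
    MA (closure {p : Cyl | p.1 ∈ G ∧ p.2 = φ p.1}) θ₀ = (φ θ₀ : ℝ) := by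
  rw [MA, pc_fiber_eq hG hφ hθ₀, image_singleton, csSup_singleton]

lemma pc_mA_eq {G : Set S1} {φ : S1 → II} (hG : G ∈ residual S1) (hφ : ContinuousOn φ G)
    {θ₀ : S1} (hθ₀ : θ₀ ∈ G) :
    mA (closure {p : Cyl | p.1 ∈ G ∧ p.2 = φ p.1}) θ₀ = (φ θ₀ : ℝ) := by
  rw [mA, pc_fiber_eq hG hφ hθ₀, image_singleton, csInf_singleton]

lemma pc_continuousAt_MA {G : Set S1} {φ : S1 → II} (hG : G ∈ residual S1)
    (hφ : ContinuousOn φ G) {θ₀ : S1} (hθ₀ : θ₀ ∈ G) :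
    ContinuousAt (MA (closure {p : Cyl | p.1 ∈ G ∧ p.2 = φ p.1})) θ₀ := by
  set Γ : Set Cyl := {p : Cyl | p.1 ∈ G ∧ p.2 = φ p.1} with hΓ
  have hMAeq : MA (closure Γ) θ₀ = (φ θ₀ : ℝ) := pc_MA_eq hG hφ hθ₀
  rw [ContinuousAt, tendsto_order]
  constructor
  · intro c hc
    set c' : ℝ := (c + MA (closure Γ) θ₀) / 2 with hc'
    have hc'1 : c < c' := by rw [hc']; linarith
    have hc'2 : c' < (φ θ₀ : ℝ) := by rw [hc', hMAeq] at *; linarith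
    have hopen : IsOpen {y : II | c' < (y : ℝ)} := isOpen_lt continuous_const continuous_subtype_val
    have hmem : {y : II | c' < (y : ℝ)} ∈ 𝓝 (φ θ₀) := hopen.mem_nhds hc'2
    have h0 := (hφ θ₀ hθ₀) hmem
    rw [Filter.mem_map, mem_nhdsWithin] at h0
    obtain ⟨U, hUo, hθ₀U, hUsub⟩ := h0
    filter_upwards [hUo.mem_nhds hθ₀U] with θ hθ
    obtain ⟨x, hxW, hxA⟩ := pc_reach (φ := φ) hG hUo (W := {y : II | c' ≤ (y : ℝ)})
      (isClosed_le continuous_const continuous_subtype_val)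
      (fun a ha => show c' ≤ ((φ a : II) : ℝ) from le_of_lt (hUsub ha)) hθ
    have hle : (x : ℝ) ≤ MA (closure Γ) θ := le_MA hxA
    have : c' ≤ (x : ℝ) := hxW
    linarith
  · intro c hc
    exact eventually_MA_lt isClosed_closure (pc_fiber_nonempty hG) hc

lemma pc_continuousAt_mA {G : Set S1} {φ : S1 → II} (hG : G ∈ residual S1)
    (hφ : ContinuousOn φ G) {θ₀ : S1} (hθ₀ : θ₀ ∈ G) :
    ContinuousAt (mA (closure {p : Cyl | p.1 ∈ G ∧ p.2 = φ p.1})) θ₀ := by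
  set Γ : Set Cyl := {p : Cyl | p.1 ∈ G ∧ p.2 = φ p.1} with hΓ
  have hmAeq : mA (closure Γ) θ₀ = (φ θ₀ : ℝ) := pc_mA_eq hG hφ hθ₀
  rw [ContinuousAt, tendsto_order]
  constructor
  · intro c hc
    exact eventually_lt_mA isClosed_closure (pc_fiber_nonempty hG) hc
  · intro c hc
    set c' : ℝ := (mA (closure Γ) θ₀ + c) / 2 with hc'
    have hc'1 : c' < c := by rw [hc']; linarith
    have hc'2 : (φ θ₀ : ℝ) < c' := by rw [hc', hmAeq] at *; linarith
    have hopen : IsOpen {y : II | (y : ℝ) < c'} := isOpen_lt continuous_subtype_val continuous_const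
    have hmem : {y : II | (y : ℝ) < c'} ∈ 𝓝 (φ θ₀) := hopen.mem_nhds hc'2
    have h0 := (hφ θ₀ hθ₀) hmem
    rw [Filter.mem_map, mem_nhdsWithin] at h0
    obtain ⟨U, hUo, hθ₀U, hUsub⟩ := h0
    filter_upwards [hUo.mem_nhds hθ₀U] with θ hθ
    obtain ⟨x, hxW, hxA⟩ := pc_reach (φ := φ) hG hUo (W := {y : II | (y : ℝ) ≤ c'})
      (isClosed_le continuous_subtype_val continuous_const)
      (fun a ha => show ((φ a : II) : ℝ) ≤ c' from le_of_lt (hUsub ha)) hθ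
    have hle : mA (closure Γ) θ ≤ (x : ℝ) := mA_le hxA
    have : (x : ℝ) ≤ c' := hxW
    linarith

end Helpers


/-- `E_{AB}` is the closure of its interior; in particular its interior is
non-empty. -/
theorem bandBetween_closure_interior (A B : Set Cyl)
    (hA : IsPseudoCurve A) (hB : IsPseudoCurve B) (hAB : stripLT A B) :
    bandBetween A B = closure (interior (bandBetween A B)) ∧
    (interior (bandBetween A B)).Nonempty := by
  obtain ⟨GA, hGA, φA, hφA, hAeq⟩ := hA
  obtain ⟨GB, hGB, φB, hφB, hBeq⟩ := hB
  obtain ⟨G0, hG0, hlt⟩ := hAB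
  replace hφA := continuousOn_iff_continuous_restrict.mpr hφA
  replace hφB := continuousOn_iff_continuous_restrict.mpr hφB
  subst hAeq; subst hBeq
  set A : Set Cyl := closure {p : Cyl | p.1 ∈ GA ∧ p.2 = φA p.1} with hAdef
  set B : Set Cyl := closure {p : Cyl | p.1 ∈ GB ∧ p.2 = φB p.1} with hBdef
  set S : Set Cyl := {p : Cyl | p.1 ∈ contPts (MA A) ∧ p.1 ∈ contPts (mA B) ∧
    MA A p.1 < (p.2 : ℝ) ∧ (p.2 : ℝ) < mA B p.1} with hSdef
  have hband : bandBetween A B = closure S := rfl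
  have hcA : ∀ θ ∈ GA, ContinuousAt (MA A) θ := fun θ hθ => pc_continuousAt_MA hGA hφA hθ
  have hcB : ∀ θ ∈ GB, ContinuousAt (mA B) θ := fun θ hθ => pc_continuousAt_mA hGB hφB hθ
  set R : Set S1 := (GA ∩ GB) ∩ G0 with hRdef
  have hR : R ∈ residual S1 := Filter.inter_mem (Filter.inter_mem hGA hGB) hG0
  have hRdense : Dense R := dense_of_mem_residual hR
  -- the key step : S is contained in the interior of its closure
  have key : S ⊆ interior (closure S) := by
    rintro ⟨θ₀, x₀⟩ ⟨h1, h2, h3, h4⟩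
    simp only [hSdef, mem_setOf_eq] at h1 h2 h3 h4 ⊢
    set a : ℝ := (MA A θ₀ + (x₀ : ℝ)) / 2 with hadef
    set b : ℝ := ((x₀ : ℝ) + mA B θ₀) / 2 with hbdef
    have ha1 : MA A θ₀ < a := by rw [hadef]; linarith
    have ha2 : a < (x₀ : ℝ) := by rw [hadef]; linarith
    have hb1 : (x₀ : ℝ) < b := by rw [hbdef]; linarith
    have hb2 : b < mA B θ₀ := by rw [hbdef]; linarith
    have hev : ∀ᶠ θ in 𝓝 θ₀, MA A θ < a ∧ b < mA B θ :=
      (h1.eventually_lt continuousAt_const ha1).and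
        (continuousAt_const.eventually_lt h2 hb2)
    obtain ⟨U, hUsub, hUo, hθ₀U⟩ := mem_nhds_iff.mp hev
    set box : Set II := {x : II | a < (x : ℝ)} ∩ {x : II | (x : ℝ) < b} with hboxdef
    have hboxo : IsOpen box :=
      (isOpen_lt continuous_const continuous_subtype_val).inter
        (isOpen_lt continuous_subtype_val continuous_const)
    have hsub2 : (U ∩ R) ×ˢ box ⊆ S := by
      rintro p ⟨⟨hpU, hpR⟩, hpbox⟩
      obtain ⟨hMAp, hmBp⟩ := hUsub hpU
      refine ⟨hcA p.1 hpR.1.1, hcB p.1 hpR.1.2, ?_, ?_⟩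
      · exact lt_trans hMAp hpbox.1
      · exact lt_trans hpbox.2 hmBp
    have hWsub : U ×ˢ box ⊆ closure S := by
      intro q hq
      have hq1 : q.1 ∈ closure (U ∩ R) := hUo.inter_closure ⟨hq.1, hRdense q.1⟩
      have hq2 : q ∈ closure (U ∩ R) ×ˢ closure box := ⟨hq1, subset_closure hq.2⟩
      rw [← closure_prod_eq] at hq2
      exact closure_mono hsub2 hq2
    exact interior_maximal hWsub (hUo.prod hboxo) ⟨hθ₀U, ha2, hb1⟩
  refine ⟨?_, ?_⟩
  · rw [hband]
    refine Subset.antisymm ?_ (closure_minimal interior_subset isClosed_closure)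
    exact closure_minimal (key.trans subset_closure) isClosed_closure
  · rw [hband]
    obtain ⟨θ₀, hθ₀⟩ := hRdense.nonempty
    have hθA : θ₀ ∈ GA := hθ₀.1.1
    have hθB : θ₀ ∈ GB := hθ₀.1.2
    have hlt0 : MA A θ₀ < mA B θ₀ := hlt θ₀ hθ₀.2
    have hMAv : MA A θ₀ = (φA θ₀ : ℝ) := pc_MA_eq hGA hφA hθA
    have hmBv : mA B θ₀ = (φB θ₀ : ℝ) := pc_mA_eq hGB hφB hθB
    have hx0mem : (MA A θ₀ + mA B θ₀) / 2 ∈ Set.Icc (0:ℝ) 1 := by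
      constructor
      · have := (φA θ₀).2.1
        rw [hMAv]
        have := (φB θ₀).2.1
        rw [hmBv]
        linarith
      · have := (φA θ₀).2.2
        rw [hMAv]
        have := (φB θ₀).2.2
        rw [hmBv]
        linarith
    set x₀ : II := ⟨(MA A θ₀ + mA B θ₀) / 2, hx0mem⟩ with hx₀def
    have hp₀ : ((θ₀, x₀) : Cyl) ∈ S := by
      refine ⟨hcA θ₀ hθA, hcB θ₀ hθB, ?_, ?_⟩
      · show MA A θ₀ < (MA A θ₀ + mA B θ₀) / 2
        linarith
      · show (MA A θ₀ + mA B θ₀) / 2 < mA B θ₀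
        linarith
    exact ⟨(θ₀, x₀), key hp₀⟩
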